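/- The linking mapping Φ induces a bijection from the set of ∼-equivalence classes of permutations of {1,…,n} onto the set S_n^c of permutations of {1,…,n} with one orbit. Concretely: (a) Φ(π) = Φ(σ) implies π ∼ σ, and (b) for every φ ∈ S_n^c there exists π with Φ(π) = φ. -/

import Mathlib

/-- Cyclic addition of the constant `k` to all values of a permutation of
`{1, …, n}` (identifying positions/values with `Fin n`, 1-based position `i`
corresponding to `i - 1 : Fin n`): `(addConst π k) i = π i + k (mod n)`. -/
def addConst {n : ℕ} (π : Equiv.Perm (Fin n)) (k : ℕ) : Equiv.Perm (Fin n) :=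
  π.trans (finRotate n ^ k)

/-- The linking permutation `Φ(π) = π⁻¹ ∘ (π + 1)`, i.e.
`Φ(π) i = π⁻¹ (π i + 1)` with cyclic value addition (`n + 1 ≡ 1`). -/
def linkPerm {n : ℕ} (π : Equiv.Perm (Fin n)) : Equiv.Perm (Fin n) :=
  (π.trans (finRotate n)).trans π.symm

/-- A permutation has exactly one orbit: iterating it reaches any element from
any element. -/
def OneOrbit {n : ℕ} (φ : Equiv.Perm (Fin n)) : Prop :=
  ∀ x y : Fin n, ∃ m : ℕ, (φ ^ m) x = y

/-- The descent set of a permutation of `{1, …, n}`, as a set of 1-based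
positions: `i ∈ [1, n-1]` is a descent iff `φ(i) > φ(i+1)`.  The 1-based
position `i` corresponds to the element `i - 1 : Fin n`. -/
def desSet {n : ℕ} (φ : Equiv.Perm (Fin n)) : Set ℕ :=
  {i : ℕ | ∃ h : i < n, 1 ≤ i ∧
    φ ⟨i, h⟩ < φ ⟨i - 1, Nat.lt_of_le_of_lt (Nat.sub_le i 1) h⟩}

/-- `π` is the suffix array of the word `w` of length `n`: `π i` is the
(0-based) starting position of the `i`-th smallest suffix of `w` in the
lexicographic order on lists (a proper prefix precedes its extensions). -/
def IsSuffixArray {α : Type*} [LinearOrder α] {n : ℕ} (w : List α)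
    (π : Equiv.Perm (Fin n)) : Prop :=
  w.length = n ∧ ∀ i j : Fin n, i < j → w.drop (π i : ℕ) < w.drop (π j : ℕ)

/-- `π` is the Burrows–Wheeler array of the word `w` of length `n`: `π i` is
the (0-based) starting position of the `i`-th smallest cyclic shift of `w`. -/
def IsBWArray {α : Type*} [LinearOrder α] {n : ℕ} (w : List α)
    (π : Equiv.Perm (Fin n)) : Prop :=
  w.length = n ∧ ∀ i j : Fin n, i < j → w.rotate (π i : ℕ) < w.rotate (π j : ℕ)

/-- A word is primitive iff it is not a proper power of another word:
`w = v^k` implies `k = 1`. -/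
def Primitive {α : Type*} (w : List α) : Prop :=
  ∀ (v : List α) (k : ℕ), w = (List.replicate k v).flatten → k = 1

/-- From `σ ∈ S_n`, the permutation `π' = (n+1) σ(1) ⋯ σ(n) ∈ S_{n+1}`:
position `1` (element `0 : Fin (n+1)`) is sent to the value `n + 1`
(element `Fin.last n`), and position `i + 1` is sent to the value `σ(i)`. -/
def appendMax {n : ℕ} (σ : Equiv.Perm (Fin n)) : Equiv.Perm (Fin (n + 1)) :=
  ((finSuccEquiv n).trans σ.optionCongr).trans (finSuccEquiv' (Fin.last n)).symm

/-- Binomial coefficient with integer arguments, which is `0` when the lower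
index is negative or exceeds the upper index. -/
def intChoose (m r : ℤ) : ℕ :=
  if 0 ≤ r ∧ r ≤ m then m.toNat.choose r.toNat else 0

/-- `π ∈ S_{n+1}` is ascending-to-max.  Values are 1-based: the value
`i ∈ [1, n-1]` corresponds to `x.castSucc` where `x : Fin n` satisfies
`(x : ℕ) + 1 = i` … i.e. `x = i - 1`; the value `i + 1` corresponds to
`x.succ`, and the value `n + 1` corresponds to `Fin.last n`. -/
def AscendingToMax {n : ℕ} (π : Equiv.Perm (Fin (n + 1))) : Prop :=
  ∀ x : Fin n, (x : ℕ) + 1 < n →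
    (π.symm x.castSucc < π.symm (Fin.last n) →
      π.symm x.succ < π.symm (Fin.last n) →
      π.symm x.castSucc < π.symm x.succ) ∧
    (π.symm (Fin.last n) < π.symm x.castSucc →
      π.symm (Fin.last n) < π.symm x.succ →
      π.symm x.succ < π.symm x.castSucc)

/-- `π ∈ S_{n+1}` is non-nesting.  Values are 1-based: the values `i, j ∈ [1, n]`
correspond to `x.castSucc, y.castSucc` with `x, y : Fin n`, and the values
`i + 1, j + 1` to `x.succ, y.succ`. -/
def NonNesting {n : ℕ} (π : Equiv.Perm (Fin (n + 1))) : Prop :=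
  ∀ x y : Fin n, π.symm x.castSucc < π.symm y.castSucc →
    ((π.symm x.castSucc < π.symm x.succ ∧ π.symm y.castSucc < π.symm y.succ) ∨
      (π.symm x.succ < π.symm x.castSucc ∧ π.symm y.succ < π.symm y.castSucc)) →
    π.symm x.succ < π.symm y.succ

open Fin.NatCast Fin.CommRing in
private lemma finRotate_pow_apply {m : ℕ} (k : ℕ) :
    ∀ x : Fin (m + 1), ((finRotate (m + 1)) ^ k) x = x + (k : Fin (m + 1)) := by
  induction k with
  | zero => intro x; simp
  | succ k ih =>
    intro x
    rw [pow_succ, Equiv.Perm.mul_apply, finRotate_succ_apply, ih]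
    push_cast
    ring

private lemma oneOrbit_pow_fix {n : ℕ} {φ : Equiv.Perm (Fin n)} (hφ : OneOrbit φ)
    {z : Fin n} {d : ℕ} (hd : 0 < d) (hz : (φ ^ d) z = z) : n ≤ d := by
  have hdq : ∀ q : ℕ, (φ ^ (d * q)) z = z := by
    intro q
    induction q with
    | zero => simp
    | succ q ih => rw [Nat.mul_succ, pow_add, Equiv.Perm.mul_apply, hz, ih]
  have hf : Function.Surjective (fun r : Fin d => (φ ^ (r : ℕ)) z) := by
    intro y
    obtain ⟨m, hm⟩ := hφ z y
    refine ⟨⟨m % d, Nat.mod_lt _ hd⟩, ?_⟩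
    have hmd : d * (m / d) + m % d = m := Nat.div_add_mod m d
    calc (φ ^ (m % d)) z = (φ ^ (m % d)) ((φ ^ (d * (m / d))) z) := by rw [hdq]
    _ = (φ ^ (m % d + d * (m / d))) z := by
        rw [pow_add, Equiv.Perm.mul_apply]
    _ = y := by rw [Nat.mod_add_div, hm]
  simpa using Fintype.card_le_of_surjective _ hf

open Fin.NatCast Fin.CommRing in
/-- The linking mapping `Φ` induces a bijection from
`S_n / ∼` onto the set of permutations of `{1, …, n}` with one orbit:
(a) `Φ(π) = Φ(σ)` implies `π ∼ σ`, and (b) every one-orbit permutation `φ`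
is `Φ(π)` for some `π`. -/
theorem linkPerm_bijective_mod_equiv {n : ℕ} (hn : 1 ≤ n) :
    (∀ π σ : Equiv.Perm (Fin n), linkPerm π = linkPerm σ →
      ∃ k : ℕ, 1 ≤ k ∧ k ≤ n ∧ σ = addConst π k) ∧
    (∀ φ : Equiv.Perm (Fin n), OneOrbit φ →
      ∃ π : Equiv.Perm (Fin n), linkPerm π = φ) := by
  obtain ⟨m, rfl⟩ : ∃ m, n = m + 1 := ⟨n - 1, (Nat.succ_pred_eq_of_pos hn).symm⟩
  constructor
  · -- part (a)
    intro π σ h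
    -- pointwise form of the hypothesis
    have h' : ∀ x : Fin (m + 1), π.symm (π x + 1) = σ.symm (σ x + 1) := by
      intro x
      have := congrArg (fun e : Equiv.Perm (Fin (m + 1)) => e x) h
      simpa [linkPerm, finRotate_succ_apply] using this
    set τ : Fin (m + 1) → Fin (m + 1) := fun y => σ (π.symm y) with hτ
    have hstep : ∀ y : Fin (m + 1), τ (y + 1) = τ y + 1 := by
      intro y
      have := h' (π.symm y)
      simp only [Equiv.apply_symm_apply] at this
      have := congrArg σ this
      simp only [Equiv.apply_symm_apply] at this
      simpa [hτ] using this
    have hlin : ∀ j : ℕ, τ (j : Fin (m + 1)) = τ 0 + (j : Fin (m + 1)) := by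
      intro j
      induction j with
      | zero => simp
      | succ j ih =>
        have : ((j + 1 : ℕ) : Fin (m + 1)) = (j : Fin (m + 1)) + 1 := by push_cast; ring
        rw [this, hstep, ih, add_assoc]
    have hall : ∀ y : Fin (m + 1), τ y = τ 0 + y := by
      intro y
      have := hlin (y : ℕ)
      rwa [Fin.cast_val_eq_self] at this
    have hσπ : ∀ x : Fin (m + 1), σ x = π x + τ 0 := by
      intro x
      have := hall (π x)
      simp only [hτ, Equiv.symm_apply_apply] at this
      rw [this]; exact add_comm _ _
    by_cases hc : τ 0 = 0
    · refine ⟨m + 1, Nat.le_add_left _ _, le_refl _, ?_⟩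
      ext x
      simp only [addConst, Equiv.trans_apply, finRotate_pow_apply]
      rw [hσπ, hc]
      simp
    · refine ⟨(τ 0 : ℕ), ?_, ?_, ?_⟩
      · exact Nat.pos_of_ne_zero (fun h0 => hc (Fin.ext (by simp [h0])))
      · exact le_of_lt (τ 0).isLt
      · ext x
        simp only [addConst, Equiv.trans_apply, finRotate_pow_apply]
        rw [hσπ, Fin.cast_val_eq_self]
  · -- part (b)
    intro φ hφ
    set g : Fin (m + 1) → Fin (m + 1) := fun j => (φ ^ (j : ℕ)) 0 with hg
    have hfix : ∀ (z : Fin (m + 1)) (d : ℕ), 0 < d → d < m + 1 → (φ ^ d) z ≠ z := by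
      intro z d hd hdm hzd
      exact absurd (oneOrbit_pow_fix hφ hd hzd) (by omega)
    have key : ∀ a b : Fin (m + 1), (a : ℕ) ≤ (b : ℕ) → g a = g b → a = b := by
      intro a b hle he
      by_contra hne
      have hlt : (a : ℕ) < (b : ℕ) := lt_of_le_of_ne hle (fun h => hne (Fin.ext h))
      have : (φ ^ ((b : ℕ) - (a : ℕ))) (g a) = g a := by
        simp only [hg] at he ⊢
        rw [← Equiv.Perm.mul_apply, ← pow_add, Nat.sub_add_cancel hle, he]
      exact hfix _ _ (by omega) (by omega) this
    have hginj : Function.Injective g := by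
      intro a b hab
      rcases le_total (a : ℕ) (b : ℕ) with hab' | hab'
      · exact key a b hab' hab
      · exact (key b a hab' hab.symm).symm
    have hgbij : Function.Bijective g := Finite.injective_iff_bijective.mp hginj
    set e : Fin (m + 1) ≃ Fin (m + 1) := Equiv.ofBijective g hgbij with he
    have heapp : ∀ j, e j = g j := fun j => rfl
    -- φ^(m+1) 0 = 0
    have hpow : (φ ^ (m + 1)) 0 = 0 := by
      obtain ⟨c, hc⟩ := hgbij.2 ((φ ^ (m + 1)) 0)
      have hc0 : (c : ℕ) = 0 := by
        by_contra h0
        have : (φ ^ ((m + 1) - (c : ℕ))) (g c) = g c := by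
          simp only [hg] at hc ⊢
          rw [← Equiv.Perm.mul_apply, ← pow_add,
            Nat.sub_add_cancel (le_of_lt c.isLt), hc]
        exact hfix _ _ (by omega) (by omega) this
      simp only [hg, hc0, pow_zero] at hc
      simpa using hc.symm
    have hkey : ∀ j : Fin (m + 1), e (j + 1) = φ (e j) := by
      intro j
      rw [heapp, heapp]
      simp only [hg]
      by_cases hj : (j : ℕ) + 1 < m + 1
      · have hval : ((j + 1 : Fin (m + 1)) : ℕ) = (j : ℕ) + 1 := by
          have : ((j + 1 : Fin (m + 1)) : ℕ) = ((j : ℕ) + 1) % (m + 1) := by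
            simp [Fin.add_def]
          rw [this, Nat.mod_eq_of_lt hj]
        rw [hval, pow_succ', Equiv.Perm.mul_apply]
      · have hjm : (j : ℕ) = m := by omega
        have hval : ((j + 1 : Fin (m + 1)) : ℕ) = 0 := by
          have : ((j + 1 : Fin (m + 1)) : ℕ) = ((j : ℕ) + 1) % (m + 1) := by
            simp [Fin.add_def]
          rw [this, hjm, Nat.mod_self]
        rw [hval, pow_zero]
        have : φ ((φ ^ (j : ℕ)) 0) = (φ ^ ((j : ℕ) + 1)) 0 := by
          rw [pow_succ', Equiv.Perm.mul_apply]
        rw [this, hjm, hpow]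
        rfl
    refine ⟨e.symm, ?_⟩
    ext x
    have : linkPerm e.symm x = e (e.symm x + 1) := by
      simp [linkPerm, finRotate_succ_apply]
    rw [this, hkey, Equiv.apply_symm_apply]
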